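/- Let X, Z, Θ be pairwise independent ℝ^d-valued random variables with finite m-th moments, m ≥ 2, and E[Z] = 0. Then there exists a constant c = c(m) such that E|X + Θ + Z|^m ≤ E|X|^m + c·(E|X|^{m−1}·E|Θ| + E[|X|^{m−2}|Z+Θ|²] + E|Z+Θ|^m). -/

import Mathlib

open MeasureTheory
open scoped RealInnerProductSpace

namespace MomentAuxP

/-- Young-type inequality: `a^r * b^s ≤ a^(r+s) + b^(r+s)`. -/
lemma young {a b r s : ℝ} (ha : 0 ≤ a) (hb : 0 ≤ b) (hr : 0 ≤ r) (hs : 0 ≤ s)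
    (hrs : r + s ≠ 0) : a ^ r * b ^ s ≤ a ^ (r + s) + b ^ (r + s) := by
  rcases le_total a b with h | h
  · calc a ^ r * b ^ s ≤ b ^ r * b ^ s :=
          mul_le_mul_of_nonneg_right (Real.rpow_le_rpow ha h hr) (Real.rpow_nonneg hb s)
    _ = b ^ (r + s) := (Real.rpow_add' hb hrs).symm
    _ ≤ a ^ (r + s) + b ^ (r + s) := le_add_of_nonneg_left (Real.rpow_nonneg ha _)
  · calc a ^ r * b ^ s ≤ a ^ r * a ^ s :=
          mul_le_mul_of_nonneg_left (Real.rpow_le_rpow hb h hs) (Real.rpow_nonneg ha r)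
    _ = a ^ (r + s) := (Real.rpow_add' ha hrs).symm
    _ ≤ a ^ (r + s) + b ^ (r + s) := le_add_of_nonneg_right (Real.rpow_nonneg hb _)

/-- Tangent line inequality for `x ↦ x^p`, `p ≥ 1`, at `y > 0`. -/
lemma tangent {p x y : ℝ} (hp : 1 ≤ p) (hx : 0 < x) (hy : 0 < y) :
    y ^ p + p * y ^ (p - 1) * (x - y) ≤ x ^ p := by
  have hb := one_add_mul_self_le_rpow_one_add (s := x / y - 1) (by
    have : 0 < x / y := div_pos hx hy
    linarith) hp
  rw [add_sub_cancel] at hb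
  have hyp : (0:ℝ) < y ^ p := Real.rpow_pos_of_pos hy p
  have hmul := mul_le_mul_of_nonneg_left hb hyp.le
  have hdiv : y ^ p * (x / y) ^ p = x ^ p := by
    rw [Real.div_rpow hx.le hy.le]
    field_simp
  have hy1 : y ^ (p - 1) = y ^ p / y := by
    rw [Real.rpow_sub hy, Real.rpow_one]
  rw [hdiv] at hmul
  rw [hy1]
  have hyne : y ≠ 0 := hy.ne'
  calc y ^ p + p * (y ^ p / y) * (x - y)
      = y ^ p * (1 + p * (x / y - 1)) := by field_simp
    _ ≤ x ^ p := hmul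

open Set in
/-- Lipschitz bound for rpow on a positive interval. -/
lemma rpow_lip {q α β L : ℝ} (hα : 0 < α)
    (hL : ∀ t ∈ Icc α β, |q * t ^ (q - 1)| ≤ L)
    {u v : ℝ} (hu : u ∈ Icc α β) (hv : v ∈ Icc α β) :
    |u ^ q - v ^ q| ≤ L * |u - v| := by
  have key := Convex.norm_image_sub_le_of_norm_hasDerivWithin_le
    (f := fun t : ℝ => t ^ q) (f' := fun t => q * t ^ (q - 1)) (C := L) (s := Icc α β)
    (fun t ht => (Real.hasDerivAt_rpow_const
      (Or.inl (lt_of_lt_of_le hα ht.1).ne')).hasDerivWithinAt)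
    (fun t ht => by simpa only [Real.norm_eq_abs] using hL t ht) (convex_Icc α β) hv hu
  simpa [Real.norm_eq_abs] using key

open Set in
/-- Key scalar Taylor-type bound. -/
lemma scalar_taylor {p : ℝ} (hp : 1 ≤ p) {s h : ℝ} (hs : 0 < s)
    (h1 : s / 4 ≤ s + h) (h2 : s + h ≤ 9 / 4 * s) :
    (s + h) ^ p ≤ s ^ p + p * s ^ (p - 1) * h
      + (p * (p - 1) * max ((1/4 : ℝ) ^ (p - 2)) ((9/4 : ℝ) ^ (p - 2))) * s ^ (p - 2) * h ^ 2 := by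
  have hsh : 0 < s + h := lt_of_lt_of_le (by linarith) h1
  set M : ℝ := max ((1/4 : ℝ) ^ (p - 2)) ((9/4 : ℝ) ^ (p - 2)) with hM
  have hα : (0:ℝ) < s / 4 := by linarith
  have hLbound : ∀ t ∈ Icc (s/4) (9/4*s), |(p-1) * t ^ ((p-1) - 1)| ≤ (p-1) * M * s ^ (p-2) := by
    intro t ht
    have ht0 : 0 < t := lt_of_lt_of_le hα ht.1
    have hp1 : 0 ≤ p - 1 := by linarith
    have habs : |(p-1) * t ^ ((p-1)-1)| = (p-1) * t ^ (p - 2) := by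
      rw [show p - 1 - 1 = p - 2 by ring,
        abs_of_nonneg (mul_nonneg hp1 (Real.rpow_nonneg ht0.le _))]
    rw [habs]
    have hts : t ^ (p - 2) ≤ M * s ^ (p - 2) := by
      rcases le_total 2 p with hc | hc
      · have h' : t ^ (p-2) ≤ (9/4*s) ^ (p-2) :=
          Real.rpow_le_rpow ht0.le ht.2 (by linarith)
        calc t ^ (p-2) ≤ (9/4*s) ^ (p-2) := h'
          _ = (9/4:ℝ) ^ (p-2) * s ^ (p-2) := Real.mul_rpow (by norm_num) hs.le
          _ ≤ M * s ^ (p-2) :=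
            mul_le_mul_of_nonneg_right (le_max_right _ _) (Real.rpow_nonneg hs.le _)
      · have h' : t ^ (p-2) ≤ (s/4) ^ (p-2) :=
          Real.rpow_le_rpow_of_nonpos hα ht.1 (by linarith)
        calc t ^ (p-2) ≤ (s/4) ^ (p-2) := h'
          _ = (1/4:ℝ) ^ (p-2) * s ^ (p-2) := by
            rw [show s/4 = (1/4:ℝ) * s by ring, Real.mul_rpow (by norm_num) hs.le]
          _ ≤ M * s ^ (p-2) :=
            mul_le_mul_of_nonneg_right (le_max_left _ _) (Real.rpow_nonneg hs.le _)
    calc (p-1) * t ^ (p-2) ≤ (p-1) * (M * s ^ (p-2)) :=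
          mul_le_mul_of_nonneg_left hts hp1
      _ = (p-1) * M * s ^ (p-2) := by ring
  have hmem1 : s + h ∈ Icc (s/4) (9/4*s) := ⟨h1, h2⟩
  have hmem2 : s ∈ Icc (s/4) (9/4*s) := ⟨by linarith, by linarith⟩
  have hlip := rpow_lip (q := p - 1) hα hLbound hmem1 hmem2
  have htan := tangent hp hs hsh
  have hstep : (s + h) ^ p ≤ s ^ p + p * (s + h) ^ (p - 1) * h := by nlinarith [htan]
  have hp0 : 0 < p := by linarith
  have hsplit : p * (s + h) ^ (p - 1) * h ≤ p * s ^ (p - 1) * h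
      + p * ((p-1) * M * s ^ (p-2)) * h ^ 2 := by
    have hlip' : |(s + h) ^ (p-1) - s ^ (p-1)| ≤ ((p-1) * M * s ^ (p-2)) * |h| := by
      simpa using hlip
    have h1' : ((s + h) ^ (p-1) - s ^ (p-1)) * h ≤ |(s + h) ^ (p-1) - s ^ (p-1)| * |h| := by
      calc ((s + h) ^ (p-1) - s ^ (p-1)) * h ≤ |((s + h) ^ (p-1) - s ^ (p-1)) * h| := le_abs_self _
        _ = |(s + h) ^ (p-1) - s ^ (p-1)| * |h| := abs_mul _ _
    have h2' := mul_le_mul_of_nonneg_right hlip' (abs_nonneg h)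
    have h3' : |h| * |h| = h ^ 2 := by rw [← abs_mul, abs_mul_self]; ring
    have habs : (s + h) ^ (p-1) * h - s ^ (p-1) * h ≤ ((p-1) * M * s ^ (p-2)) * h ^ 2 := by
      calc (s + h) ^ (p-1) * h - s ^ (p-1) * h
          = ((s + h) ^ (p-1) - s ^ (p-1)) * h := by ring
        _ ≤ |(s + h) ^ (p-1) - s ^ (p-1)| * |h| := h1'
        _ ≤ ((p-1) * M * s ^ (p-2)) * |h| * |h| := h2'
        _ = ((p-1) * M * s ^ (p-2)) * h ^ 2 := by rw [mul_assoc, h3']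
    nlinarith [mul_le_mul_of_nonneg_left habs hp0.le]
  calc (s + h) ^ p ≤ s ^ p + p * (s + h) ^ (p - 1) * h := hstep
    _ ≤ s ^ p + p * s ^ (p-1) * h + p * ((p-1) * M * s ^ (p-2)) * h ^ 2 := by linarith
    _ = s ^ p + p * s ^ (p-1) * h + (p * (p-1) * M) * s ^ (p-2) * h ^ 2 := by ring

/-- The constant in the deterministic moment expansion. -/
noncomputable def Cm (m : ℝ) : ℝ :=
  3 ^ m + m * 2 ^ (m - 1) + m / 2
    + (25/4) * ((m/2) * (m/2 - 1) * max ((1/4:ℝ) ^ (m/2 - 2)) ((9/4:ℝ) ^ (m/2 - 2))) + 1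

lemma M_nonneg (m : ℝ) : 0 ≤ max ((1/4:ℝ) ^ (m/2 - 2)) ((9/4:ℝ) ^ (m/2 - 2)) :=
  le_trans (Real.rpow_nonneg (by norm_num) _) (le_max_left _ _)

lemma K_nonneg {m : ℝ} (hm : 2 ≤ m) :
    0 ≤ (m/2) * (m/2 - 1) * max ((1/4:ℝ) ^ (m/2 - 2)) ((9/4:ℝ) ^ (m/2 - 2)) :=
  mul_nonneg (mul_nonneg (by linarith) (by linarith)) (M_nonneg m)

lemma Cm_pos {m : ℝ} (hm : 2 ≤ m) : 0 < Cm m := by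
  unfold Cm
  have h1 : (0:ℝ) < 3 ^ m := Real.rpow_pos_of_pos (by norm_num) m
  have h2 : (0:ℝ) ≤ m * 2 ^ (m-1) :=
    mul_nonneg (by linarith) (Real.rpow_nonneg (by norm_num) _)
  have h3 := K_nonneg hm
  nlinarith [h3]

lemma rpow_mul_self {t r : ℝ} (ht : 0 ≤ t) (hr : r + 1 ≠ 0) : t ^ r * t = t ^ (r+1) := by
  rw [Real.rpow_add' ht hr, Real.rpow_one]

lemma sq_rpow {t : ℝ} (ht : 0 ≤ t) (q : ℝ) : ((t ^ 2 : ℝ)) ^ q = t ^ (2*q) := by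
  rw [← Real.rpow_natCast t 2, ← Real.rpow_mul ht]
  norm_num

/-- The deterministic moment-expansion inequality. -/
lemma vector_bound {m : ℝ} (hm : 2 ≤ m) {E : Type*} [NormedAddCommGroup E]
    [InnerProductSpace ℝ E] (x w : E) :
    ‖x + w‖ ^ m ≤ ‖x‖ ^ m + m * (‖x‖ ^ (m - 2) * ⟪x, w⟫)
      + Cm m * (‖x‖ ^ (m - 2) * ‖w‖ ^ 2 + ‖w‖ ^ m) := by
  have ha : 0 ≤ ‖x‖ := norm_nonneg x
  have hb : 0 ≤ ‖w‖ := norm_nonneg w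
  have hm0 : (0:ℝ) < m := by linarith
  have hI : |⟪x, w⟫| ≤ ‖x‖ * ‖w‖ := abs_real_inner_le_norm x w
  have hI1 : -(‖x‖ * ‖w‖) ≤ ⟪x, w⟫ := (abs_le.mp hI).1
  have hI2 : ⟪x, w⟫ ≤ ‖x‖ * ‖w‖ := (abs_le.mp hI).2
  have ham : 0 ≤ ‖x‖ ^ m := Real.rpow_nonneg ha m
  have hbm : 0 ≤ ‖w‖ ^ m := Real.rpow_nonneg hb m
  have ham2 : 0 ≤ ‖x‖ ^ (m-2) := Real.rpow_nonneg ha _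
  have hA0 : 0 ≤ ‖x‖ ^ (m-2) * ‖w‖ ^ 2 := mul_nonneg ham2 (by positivity)
  rcases le_or_gt ‖x‖ (2 * ‖w‖) with hcase | hcase
  · -- small `x` case
    have hL : ‖x + w‖ ^ m ≤ 3 ^ m * ‖w‖ ^ m := by
      calc ‖x + w‖ ^ m ≤ (3 * ‖w‖) ^ m := by
            refine Real.rpow_le_rpow (norm_nonneg _) ?_ hm0.le
            calc ‖x + w‖ ≤ ‖x‖ + ‖w‖ := norm_add_le x w
              _ ≤ 3 * ‖w‖ := by linarith
        _ = 3 ^ m * ‖w‖ ^ m := Real.mul_rpow (by norm_num) hb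
    have e1 : ‖x‖ ^ (m-2) * ‖x‖ = ‖x‖ ^ (m-1) := by
      rw [rpow_mul_self ha (by intro hc; linarith : (m-2) + 1 ≠ 0)]
      congr 1; ring
    have e2 : ‖w‖ ^ (m-1) * ‖w‖ = ‖w‖ ^ m := by
      rw [rpow_mul_self hb (by intro hc; linarith : (m-1) + 1 ≠ 0)]
      congr 1; ring
    have hcross : ‖x‖ ^ (m-2) * |⟪x, w⟫| ≤ 2 ^ (m-1) * ‖w‖ ^ m := by
      calc ‖x‖ ^ (m-2) * |⟪x, w⟫| ≤ ‖x‖ ^ (m-2) * (‖x‖ * ‖w‖) :=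
            mul_le_mul_of_nonneg_left hI ham2
        _ = ‖x‖ ^ (m-1) * ‖w‖ := by rw [← e1]; ring
        _ ≤ (2*‖w‖) ^ (m-1) * ‖w‖ :=
            mul_le_mul_of_nonneg_right (Real.rpow_le_rpow ha hcase (by linarith)) hb
        _ = 2 ^ (m-1) * (‖w‖ ^ (m-1) * ‖w‖) := by
            rw [Real.mul_rpow (by norm_num) hb]; ring
        _ = 2 ^ (m-1) * ‖w‖ ^ m := by rw [e2]
    have hcross' : -(m * (‖x‖ ^ (m-2) * ⟪x, w⟫)) ≤ m * (2 ^ (m-1) * ‖w‖ ^ m) := by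
      have h1 : -(‖x‖ ^ (m-2) * ⟪x, w⟫) ≤ ‖x‖ ^ (m-2) * |⟪x, w⟫| := by
        rw [← mul_neg]
        exact mul_le_mul_of_nonneg_left (neg_le_abs _) ham2
      have h2 := mul_le_mul_of_nonneg_left (h1.trans hcross) hm0.le
      nlinarith [h2]
    have hCm : 3 ^ m + m * 2 ^ (m-1) ≤ Cm m := by
      unfold Cm
      have h3 := K_nonneg hm
      nlinarith [h3]
    have hq1 := mul_le_mul_of_nonneg_right hCm hbm
    have hq2 := mul_nonneg (Cm_pos hm).le hA0
    nlinarith [hL, hcross', hq1, hq2, ham]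
  · -- large `x` case
    have ha0 : 0 < ‖x‖ := lt_of_le_of_lt (by positivity) hcase
    have hs : (0:ℝ) < ‖x‖ ^ 2 := by positivity
    have hfac1 : (0:ℝ) ≤ (‖x‖ - 2*‖w‖) * (3*‖x‖ - 2*‖w‖) :=
      mul_nonneg (by linarith) (by linarith)
    have hfac2 : (0:ℝ) ≤ (‖x‖ - 2*‖w‖) * (2*‖w‖ + 5*‖x‖) :=
      mul_nonneg (by linarith) (by linarith)
    have h1 : ‖x‖ ^ 2 / 4 ≤ ‖x‖ ^ 2 + (2 * ⟪x, w⟫ + ‖w‖ ^ 2) := by nlinarith [hI1]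
    have h2 : ‖x‖ ^ 2 + (2 * ⟪x, w⟫ + ‖w‖ ^ 2) ≤ 9 / 4 * ‖x‖ ^ 2 := by nlinarith [hI2]
    have hp : 1 ≤ m/2 := by linarith
    have key := scalar_taylor hp hs h1 h2
    have es0 : ‖x‖ ^ 2 + (2 * ⟪x, w⟫ + ‖w‖ ^ 2) = ‖x + w‖ ^ 2 := by
      rw [norm_add_sq_real]; ring
    rw [es0] at key
    rw [sq_rpow (norm_nonneg (x+w)) (m/2), show 2 * (m/2) = m by ring] at key
    rw [sq_rpow ha (m/2), show 2 * (m/2) = m by ring] at key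
    rw [sq_rpow ha (m/2 - 1), show 2 * (m/2 - 1) = m - 2 by ring] at key
    rw [sq_rpow ha (m/2 - 2), show 2 * (m/2 - 2) = m - 4 by ring] at key
    have hhub : 2 * ⟪x, w⟫ + ‖w‖ ^ 2 ≤ 5/2 * (‖x‖ * ‖w‖) := by
      linarith [hI2, mul_le_mul_of_nonneg_left (show ‖w‖ ≤ ‖x‖/2 by linarith) hb]
    have hhlb : -(5/2 * (‖x‖ * ‖w‖)) ≤ 2 * ⟪x, w⟫ + ‖w‖ ^ 2 := by
      linarith [hI1, sq_nonneg ‖w‖, mul_nonneg ha hb]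
    have hh2 : (2 * ⟪x, w⟫ + ‖w‖ ^ 2) ^ 2 ≤ 25/4 * (‖x‖^2 * ‖w‖^2) := by
      have h4 := sq_le_sq' hhlb hhub
      linarith [h4]
    have ham4 : 0 ≤ ‖x‖ ^ (m-4) := Real.rpow_nonneg ha _
    have e5 : ‖x‖ ^ (m-4) * ‖x‖ ^ (2:ℕ) = ‖x‖ ^ (m-2) := by
      rw [← Real.rpow_natCast ‖x‖ 2, ← Real.rpow_add ha0]
      congr 1; push_cast; ring
    have hrem : ‖x‖ ^ (m-4) * (2 * ⟪x, w⟫ + ‖w‖ ^ 2) ^ 2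
        ≤ 25/4 * (‖x‖ ^ (m-2) * ‖w‖ ^ 2) := by
      calc ‖x‖ ^ (m-4) * (2 * ⟪x, w⟫ + ‖w‖ ^ 2) ^ 2
          ≤ ‖x‖ ^ (m-4) * (25/4 * (‖x‖^2 * ‖w‖^2)) :=
            mul_le_mul_of_nonneg_left hh2 ham4
        _ = 25/4 * ((‖x‖ ^ (m-4) * ‖x‖ ^ (2:ℕ)) * ‖w‖ ^ 2) := by ring
        _ = 25/4 * (‖x‖ ^ (m-2) * ‖w‖ ^ 2) := by rw [e5]
    have hK0 : 0 ≤ (m/2) * (m/2 - 1) * max ((1/4:ℝ) ^ (m/2 - 2)) ((9/4:ℝ) ^ (m/2 - 2)) :=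
      K_nonneg hm
    have hrem' := mul_le_mul_of_nonneg_left hrem hK0
    have hCm2 : m/2 + 25/4 * ((m/2) * (m/2 - 1) * max ((1/4:ℝ) ^ (m/2 - 2)) ((9/4:ℝ) ^ (m/2 - 2)))
        ≤ Cm m := by
      unfold Cm
      have h1' : (0:ℝ) < 3 ^ m := Real.rpow_pos_of_pos (by norm_num) m
      have h2' : (0:ℝ) ≤ m * 2 ^ (m-1) :=
        mul_nonneg (by linarith) (Real.rpow_nonneg (by norm_num) _)
      linarith
    have hq3 := mul_le_mul_of_nonneg_right hCm2 hA0
    have hq4 := mul_nonneg (Cm_pos hm).le hbm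
    linarith [key, hrem', hq3, hq4]

/-- Doubling bound. -/
lemma norm_add_rpow_le {m : ℝ} (hm : 0 ≤ m) {E : Type*} [SeminormedAddGroup E] (u v : E) :
    ‖u + v‖ ^ m ≤ 2 ^ m * (‖u‖ ^ m + ‖v‖ ^ m) := by
  have h2m : (0:ℝ) ≤ 2 ^ m := Real.rpow_nonneg (by norm_num) m
  rcases le_total ‖u‖ ‖v‖ with h | h
  · calc ‖u + v‖ ^ m ≤ (2*‖v‖) ^ m := by
          refine Real.rpow_le_rpow (norm_nonneg _) ?_ hm
          have := norm_add_le u v; linarith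
      _ = 2 ^ m * ‖v‖ ^ m := Real.mul_rpow (by norm_num) (norm_nonneg _)
      _ ≤ 2 ^ m * (‖u‖ ^ m + ‖v‖ ^ m) :=
          mul_le_mul_of_nonneg_left
            (le_add_of_nonneg_left (Real.rpow_nonneg (norm_nonneg _) _)) h2m
  · calc ‖u + v‖ ^ m ≤ (2*‖u‖) ^ m := by
          refine Real.rpow_le_rpow (norm_nonneg _) ?_ hm
          have := norm_add_le u v; linarith
      _ = 2 ^ m * ‖u‖ ^ m := Real.mul_rpow (by norm_num) (norm_nonneg _)
      _ ≤ 2 ^ m * (‖u‖ ^ m + ‖v‖ ^ m) :=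
          mul_le_mul_of_nonneg_left
            (le_add_of_nonneg_right (Real.rpow_nonneg (norm_nonneg _) _)) h2m

/-- `|‖u‖^(m-2) ⟪u,v⟫| ≤ ‖u‖^(m-1) ‖v‖`. -/
lemma inner_term_bound {m : ℝ} (hm : 2 ≤ m) {E : Type*} [NormedAddCommGroup E]
    [InnerProductSpace ℝ E] (u v : E) :
    |‖u‖ ^ (m-2) * ⟪u, v⟫| ≤ ‖u‖ ^ (m-1) * ‖v‖ := by
  have ham2 : 0 ≤ ‖u‖ ^ (m-2) := Real.rpow_nonneg (norm_nonneg u) _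
  have e1 : ‖u‖ ^ (m-2) * ‖u‖ = ‖u‖ ^ (m-1) := by
    rw [rpow_mul_self (norm_nonneg u) (by intro hc; linarith : (m-2) + 1 ≠ 0)]
    congr 1; ring
  rw [abs_mul, abs_of_nonneg ham2]
  calc ‖u‖ ^ (m-2) * |⟪u, v⟫| ≤ ‖u‖ ^ (m-2) * (‖u‖ * ‖v‖) :=
        mul_le_mul_of_nonneg_left (abs_real_inner_le_norm u v) ham2
    _ = (‖u‖ ^ (m-2) * ‖u‖) * ‖v‖ := by ring
    _ = ‖u‖ ^ (m-1) * ‖v‖ := by rw [e1]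

/-- `‖u‖^(m-1) ‖v‖ ≤ ‖u‖^m + ‖v‖^m`. -/
lemma prod_term_bound {m : ℝ} (hm : 2 ≤ m) {E : Type*} [SeminormedAddGroup E] (u v : E) :
    ‖u‖ ^ (m-1) * ‖v‖ ≤ ‖u‖ ^ m + ‖v‖ ^ m := by
  have h := young (norm_nonneg u) (norm_nonneg v) (by linarith : (0:ℝ) ≤ m - 1)
    (by norm_num : (0:ℝ) ≤ 1) (by intro hc; linarith : (m-1) + 1 ≠ 0)
  rw [Real.rpow_one, show (m-1) + 1 = m by ring] at h
  exact h

/-- coordinates are dominated by the norm in Euclidean space. -/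
lemma coord_le_norm {d : ℕ} (u : EuclideanSpace ℝ (Fin d)) (i : Fin d) : |u i| ≤ ‖u‖ := by
  rw [EuclideanSpace.norm_eq, ← Real.sqrt_sq_eq_abs]
  apply Real.sqrt_le_sqrt
  have h := Finset.single_le_sum (f := fun j => ‖u j‖^2) (fun j _ => sq_nonneg _)
    (Finset.mem_univ i)
  simpa [Real.norm_eq_abs, sq_abs] using h

end MomentAuxP

open MomentAuxP

/-- Moment expansion lemma: for pairwise independent `X, Z, Θ` with finite `m`-th moments,
`m ≥ 2`, and `E[Z] = 0`, there is a constant `c = c(m)` with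
`E|X+Θ+Z|^m ≤ E|X|^m + c(E|X|^{m−1}E|Θ| + E[|X|^{m−2}|Z+Θ|²] + E|Z+Θ|^m)`. -/
theorem moment_expansion_bound (m : ℝ) (hm : 2 ≤ m) :
    ∃ c : ℝ, 0 < c ∧
      ∀ (d : ℕ) (Ω : Type) (_ : MeasurableSpace Ω) (P : Measure Ω),
        IsProbabilityMeasure P →
        ∀ X Z Θ : Ω → EuclideanSpace ℝ (Fin d),
          AEMeasurable X P → AEMeasurable Z P → AEMeasurable Θ P →
          ProbabilityTheory.IndepFun X Z P →
          ProbabilityTheory.IndepFun X Θ P →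
          ProbabilityTheory.IndepFun Z Θ P →
          Integrable (fun ω => ‖X ω‖ ^ m) P →
          Integrable (fun ω => ‖Z ω‖ ^ m) P →
          Integrable (fun ω => ‖Θ ω‖ ^ m) P →
          Integrable Z P →
          (∫ ω, Z ω ∂P) = 0 →
          (∫ ω, ‖X ω + Θ ω + Z ω‖ ^ m ∂P) ≤ (∫ ω, ‖X ω‖ ^ m ∂P) +
            c * ((∫ ω, ‖X ω‖ ^ (m - 1) ∂P) * (∫ ω, ‖Θ ω‖ ∂P) +
                 (∫ ω, ‖X ω‖ ^ (m - 2) * ‖Z ω + Θ ω‖ ^ 2 ∂P) +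
                 (∫ ω, ‖Z ω + Θ ω‖ ^ m ∂P)) := by
  have hm0 : (0:ℝ) < m := by linarith
  refine ⟨m + Cm m, by linarith [Cm_pos hm], ?_⟩
  intro d Ω mΩ P hP X Z Θ hX hZ hΘ hXZ hXΘ hZΘ hXm hZm hΘm hZint hZ0
  have hW : AEMeasurable (fun ω => Z ω + Θ ω) P := hZ.add hΘ
  have hXΘZ : AEMeasurable (fun ω => X ω + Θ ω + Z ω) P := (hX.add hΘ).add hZ
  -- measurability of norm powers
  have hnr : ∀ (Y : Ω → EuclideanSpace ℝ (Fin d)), AEMeasurable Y P → ∀ q : ℝ, 0 ≤ q →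
      AEStronglyMeasurable (fun ω => ‖Y ω‖ ^ q) P := fun Y hY q hq =>
    ((Real.continuous_rpow_const hq).measurable.comp_aemeasurable hY.norm).aestronglyMeasurable
  -- lower moments are integrable
  have hint_pow : ∀ (Y : Ω → EuclideanSpace ℝ (Fin d)), AEMeasurable Y P →
      Integrable (fun ω => ‖Y ω‖ ^ m) P → ∀ q : ℝ, 0 ≤ q → q ≤ m →
      Integrable (fun ω => ‖Y ω‖ ^ q) P := by
    intro Y hY hYm q hq0 hqm
    refine Integrable.mono' ((integrable_const (1:ℝ)).add hYm) (hnr Y hY q hq0) ?_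
    filter_upwards with ω
    rw [Real.norm_eq_abs, abs_of_nonneg (Real.rpow_nonneg (norm_nonneg _) _)]
    simp only [Pi.add_apply]
    rcases le_total (‖Y ω‖) 1 with h | h
    · have h1 := Real.rpow_le_one (norm_nonneg _) h hq0
      have h2 := Real.rpow_nonneg (norm_nonneg (Y ω)) m
      linarith
    · have h1 := Real.rpow_le_rpow_of_exponent_le h hqm
      linarith
  have hintX1 : Integrable (fun ω => ‖X ω‖ ^ (m-1)) P :=
    hint_pow X hX hXm _ (by linarith) (by linarith)
  have hintΘ1 : Integrable (fun ω => ‖Θ ω‖) P := by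
    have h := hint_pow Θ hΘ hΘm 1 (by norm_num) (by linarith)
    simpa [Real.rpow_one] using h
  -- integrability of the m-th moment of W = Z + Θ
  have hintWm : Integrable (fun ω => ‖Z ω + Θ ω‖ ^ m) P := by
    refine Integrable.mono' ((hZm.add hΘm).const_mul (2^m)) (hnr _ hW m hm0.le) ?_
    filter_upwards with ω
    rw [Real.norm_eq_abs, abs_of_nonneg (Real.rpow_nonneg (norm_nonneg _) _)]
    exact norm_add_rpow_le hm0.le (Z ω) (Θ ω)
  -- integrability of the second-order term
  have hintA : Integrable (fun ω => ‖X ω‖ ^ (m-2) * ‖Z ω + Θ ω‖ ^ 2) P := by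
    refine Integrable.mono' (hXm.add hintWm)
      ((hnr X hX _ (by linarith)).mul
        ((hW.norm.pow_const 2).aestronglyMeasurable)) ?_
    filter_upwards with ω
    rw [Real.norm_eq_abs, abs_of_nonneg (mul_nonneg (Real.rpow_nonneg (norm_nonneg _) _)
      (by positivity))]
    have h := young (norm_nonneg (X ω)) (norm_nonneg (Z ω + Θ ω))
      (by linarith : (0:ℝ) ≤ m - 2) (by norm_num : (0:ℝ) ≤ 2)
      (by intro hc; linarith : (m-2) + 2 ≠ 0)
    rw [Real.rpow_two, show (m-2) + 2 = m by ring] at h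
    exact h
  -- integrability of the inner-product terms
  have hinner_int : ∀ (V : Ω → EuclideanSpace ℝ (Fin d)), AEMeasurable V P →
      Integrable (fun ω => ‖V ω‖ ^ m) P →
      Integrable (fun ω => ‖X ω‖ ^ (m-2) * ⟪X ω, V ω⟫) P := by
    intro V hV hVm
    refine Integrable.mono' (hXm.add hVm)
      ((hnr X hX _ (by linarith)).mul (hX.inner hV).aestronglyMeasurable) ?_
    filter_upwards with ω
    rw [Real.norm_eq_abs]
    exact le_trans (inner_term_bound hm _ _) (prod_term_bound hm _ _)
  have hintGZ := hinner_int Z hZ hZm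
  have hintGΘ := hinner_int Θ hΘ hΘm
  have hintGW := hinner_int _ hW hintWm
  have hintXΘprod : Integrable (fun ω => ‖X ω‖ ^ (m-1) * ‖Θ ω‖) P := by
    refine Integrable.mono' (hXm.add hΘm)
      ((hnr X hX _ (by linarith)).mul hΘ.norm.aestronglyMeasurable) ?_
    filter_upwards with ω
    rw [Real.norm_eq_abs, abs_of_nonneg (mul_nonneg (Real.rpow_nonneg (norm_nonneg _) _)
      (norm_nonneg _))]
    exact prod_term_bound hm _ _
  -- the cross term with Z vanishes
  have hzero : ∫ ω, ‖X ω‖ ^ (m-2) * ⟪X ω, Z ω⟫ ∂P = 0 := by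
    have hexp : (fun ω => ‖X ω‖ ^ (m-2) * ⟪X ω, Z ω⟫)
        = fun ω => ∑ i, (‖X ω‖ ^ (m-2) * X ω i) * Z ω i := by
      funext ω
      rw [show ⟪X ω, Z ω⟫ = ∑ i, X ω i * Z ω i from by
        simp [PiLp.inner_apply, RCLike.inner_apply, mul_comm], Finset.mul_sum]
      exact Finset.sum_congr rfl fun i _ => by ring
    have hφmeas : ∀ i : Fin d, Measurable
        (fun u : EuclideanSpace ℝ (Fin d) => ‖u‖ ^ (m-2) * u i) := by
      intro i
      exact (((Real.continuous_rpow_const (by linarith)).comp continuous_norm).measurable).mul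
        ((EuclideanSpace.proj (𝕜 := ℝ) i).continuous.measurable)
    have hψmeas : ∀ i : Fin d, Measurable
        (fun u : EuclideanSpace ℝ (Fin d) => u i) := fun i =>
      (EuclideanSpace.proj (𝕜 := ℝ) i).continuous.measurable
    have hintφ : ∀ i : Fin d, Integrable (fun ω => ‖X ω‖ ^ (m-2) * X ω i) P := by
      intro i
      refine Integrable.mono' ((integrable_const (1:ℝ)).add hXm)
        (((hφmeas i).comp_aemeasurable hX).aestronglyMeasurable) ?_
      filter_upwards with ω
      rw [Real.norm_eq_abs, abs_mul, abs_of_nonneg (Real.rpow_nonneg (norm_nonneg _) _)]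
      simp only [Pi.add_apply]
      have h1 : ‖X ω‖ ^ (m-2) * |X ω i| ≤ ‖X ω‖ ^ (m-2) * ‖X ω‖ :=
        mul_le_mul_of_nonneg_left (coord_le_norm _ i) (Real.rpow_nonneg (norm_nonneg _) _)
      have e1 : ‖X ω‖ ^ (m-2) * ‖X ω‖ = ‖X ω‖ ^ (m-1) := by
        rw [rpow_mul_self (norm_nonneg _) (by intro hc; linarith : (m-2) + 1 ≠ 0)]
        congr 1; ring
      have h2 : ‖X ω‖ ^ (m-1) ≤ 1 + ‖X ω‖ ^ m := by
        rcases le_total (‖X ω‖) 1 with h | h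
        · have := Real.rpow_le_one (norm_nonneg _) h (by linarith : (0:ℝ) ≤ m - 1)
          have := Real.rpow_nonneg (norm_nonneg (X ω)) m
          linarith [Real.rpow_le_one (norm_nonneg (X ω)) h (by linarith : (0:ℝ) ≤ m - 1)]
        · have := Real.rpow_le_rpow_of_exponent_le h (by linarith : m - 1 ≤ m)
          linarith
      calc ‖X ω‖ ^ (m-2) * |X ω i| ≤ ‖X ω‖ ^ (m-1) := by rw [← e1]; exact h1
        _ ≤ 1 + ‖X ω‖ ^ m := h2
    have hintψ : ∀ i : Fin d, Integrable (fun ω => Z ω i) P := fun i =>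
      (EuclideanSpace.proj (𝕜 := ℝ) i).integrable_comp hZint
    have hZi : ∀ i : Fin d, ∫ ω, Z ω i ∂P = 0 := by
      intro i
      have h := (EuclideanSpace.proj (𝕜 := ℝ) i).integral_comp_comm hZint
      rw [hZ0] at h
      simpa using h
    have hintprod : ∀ i : Fin d, Integrable (fun ω => (‖X ω‖ ^ (m-2) * X ω i) * Z ω i) P := by
      intro i
      exact (hXZ.comp (hφmeas i) (hψmeas i)).integrable_mul (hintφ i) (hintψ i)
    rw [hexp, integral_finset_sum _ (fun i _ => hintprod i)]
    refine Finset.sum_eq_zero fun i _ => ?_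
    have h := (hXZ.comp (hφmeas i) (hψmeas i)).integral_fun_mul_eq_mul_integral
      (hintφ i).aestronglyMeasurable (hintψ i).aestronglyMeasurable
    calc ∫ ω, (‖X ω‖ ^ (m-2) * X ω i) * Z ω i ∂P
        = (∫ ω, ‖X ω‖ ^ (m-2) * X ω i ∂P) * ∫ ω, Z ω i ∂P := h
      _ = 0 := by rw [hZi i, mul_zero]
  -- product formula for the Θ term
  have hprod : ∫ ω, ‖X ω‖ ^ (m-1) * ‖Θ ω‖ ∂P
      = (∫ ω, ‖X ω‖ ^ (m-1) ∂P) * ∫ ω, ‖Θ ω‖ ∂P := by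
    have hφ : Measurable (fun u : EuclideanSpace ℝ (Fin d) => ‖u‖ ^ (m-1)) :=
      ((Real.continuous_rpow_const (by linarith)).comp continuous_norm).measurable
    have hψ : Measurable (fun u : EuclideanSpace ℝ (Fin d) => ‖u‖) := continuous_norm.measurable
    exact (hXΘ.comp hφ hψ).integral_fun_mul_eq_mul_integral hintX1.aestronglyMeasurable hintΘ1.aestronglyMeasurable
  -- pointwise bound
  have hpt : ∀ ω, ‖X ω + Θ ω + Z ω‖ ^ m ≤ ‖X ω‖ ^ m
      + m * (‖X ω‖ ^ (m-2) * ⟪X ω, Z ω + Θ ω⟫)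
      + Cm m * (‖X ω‖ ^ (m-2) * ‖Z ω + Θ ω‖ ^ 2 + ‖Z ω + Θ ω‖ ^ m) := by
    intro ω
    have e : X ω + Θ ω + Z ω = X ω + (Z ω + Θ ω) := by abel
    rw [e]
    exact vector_bound hm (X ω) (Z ω + Θ ω)
  have hintL : Integrable (fun ω => ‖X ω + Θ ω + Z ω‖ ^ m) P := by
    refine Integrable.mono' ((hXm.add hintWm).const_mul (2^m)) (hnr _ hXΘZ m hm0.le) ?_
    filter_upwards with ω
    rw [Real.norm_eq_abs, abs_of_nonneg (Real.rpow_nonneg (norm_nonneg _) _)]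
    have e : X ω + Θ ω + Z ω = X ω + (Z ω + Θ ω) := by abel
    rw [e]
    exact norm_add_rpow_le hm0.le (X ω) (Z ω + Θ ω)
  have hintR : Integrable (fun ω => ‖X ω‖ ^ m
      + m * (‖X ω‖ ^ (m-2) * ⟪X ω, Z ω + Θ ω⟫)
      + Cm m * (‖X ω‖ ^ (m-2) * ‖Z ω + Θ ω‖ ^ 2 + ‖Z ω + Θ ω‖ ^ m)) P :=
    (hXm.add (hintGW.const_mul m)).add ((hintA.add hintWm).const_mul (Cm m))
  have hmain := integral_mono hintL hintR hpt
  -- split the integral of the RHS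
  have hs1 : ∫ ω, (‖X ω‖ ^ m + m * (‖X ω‖ ^ (m-2) * ⟪X ω, Z ω + Θ ω⟫)
        + Cm m * (‖X ω‖ ^ (m-2) * ‖Z ω + Θ ω‖ ^ 2 + ‖Z ω + Θ ω‖ ^ m)) ∂P
      = (∫ ω, ‖X ω‖ ^ m + m * (‖X ω‖ ^ (m-2) * ⟪X ω, Z ω + Θ ω⟫) ∂P)
      + ∫ ω, Cm m * (‖X ω‖ ^ (m-2) * ‖Z ω + Θ ω‖ ^ 2 + ‖Z ω + Θ ω‖ ^ m) ∂P :=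
    integral_add (hXm.add (hintGW.const_mul m)) ((hintA.add hintWm).const_mul (Cm m))
  have hs2 : ∫ ω, (‖X ω‖ ^ m + m * (‖X ω‖ ^ (m-2) * ⟪X ω, Z ω + Θ ω⟫)) ∂P
      = (∫ ω, ‖X ω‖ ^ m ∂P) + ∫ ω, m * (‖X ω‖ ^ (m-2) * ⟪X ω, Z ω + Θ ω⟫) ∂P :=
    integral_add hXm (hintGW.const_mul m)
  have hs3 : ∫ ω, m * (‖X ω‖ ^ (m-2) * ⟪X ω, Z ω + Θ ω⟫) ∂P
      = m * ∫ ω, ‖X ω‖ ^ (m-2) * ⟪X ω, Z ω + Θ ω⟫ ∂P := integral_const_mul m _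
  have hs4 : ∫ ω, Cm m * (‖X ω‖ ^ (m-2) * ‖Z ω + Θ ω‖ ^ 2 + ‖Z ω + Θ ω‖ ^ m) ∂P
      = Cm m * ∫ ω, (‖X ω‖ ^ (m-2) * ‖Z ω + Θ ω‖ ^ 2 + ‖Z ω + Θ ω‖ ^ m) ∂P :=
    integral_const_mul (Cm m) _
  have hs5 : ∫ ω, (‖X ω‖ ^ (m-2) * ‖Z ω + Θ ω‖ ^ 2 + ‖Z ω + Θ ω‖ ^ m) ∂P
      = (∫ ω, ‖X ω‖ ^ (m-2) * ‖Z ω + Θ ω‖ ^ 2 ∂P) + ∫ ω, ‖Z ω + Θ ω‖ ^ m ∂P :=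
    integral_add hintA hintWm
  rw [hs1, hs2, hs3, hs4, hs5] at hmain
  -- split the inner-product integral
  have hGW : ∫ ω, ‖X ω‖ ^ (m-2) * ⟪X ω, Z ω + Θ ω⟫ ∂P
      = (∫ ω, ‖X ω‖ ^ (m-2) * ⟪X ω, Z ω⟫ ∂P) + ∫ ω, ‖X ω‖ ^ (m-2) * ⟪X ω, Θ ω⟫ ∂P := by
    rw [← integral_add hintGZ hintGΘ]
    congr 1; funext ω
    rw [inner_add_right]; ring
  rw [hGW, hzero, zero_add] at hmain
  -- bound the Θ inner-product term
  have hGΘle : ∫ ω, ‖X ω‖ ^ (m-2) * ⟪X ω, Θ ω⟫ ∂P ≤ ∫ ω, ‖X ω‖ ^ (m-1) * ‖Θ ω‖ ∂P :=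
    integral_mono hintGΘ hintXΘprod fun ω =>
      le_trans (le_abs_self _) (inner_term_bound hm (X ω) (Θ ω))
  rw [hprod] at hGΘle
  -- nonnegativity
  have hE1 : 0 ≤ ∫ ω, ‖X ω‖ ^ (m-1) ∂P :=
    integral_nonneg fun ω => Real.rpow_nonneg (norm_nonneg _) _
  have hE2 : 0 ≤ ∫ ω, ‖Θ ω‖ ∂P := integral_nonneg fun ω => norm_nonneg _
  have hT1 : 0 ≤ (∫ ω, ‖X ω‖ ^ (m-1) ∂P) * ∫ ω, ‖Θ ω‖ ∂P := mul_nonneg hE1 hE2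
  have hT2 : 0 ≤ ∫ ω, ‖X ω‖ ^ (m-2) * ‖Z ω + Θ ω‖ ^ 2 ∂P :=
    integral_nonneg fun ω => mul_nonneg (Real.rpow_nonneg (norm_nonneg _) _) (by positivity)
  have hT3 : 0 ≤ ∫ ω, ‖Z ω + Θ ω‖ ^ m ∂P :=
    integral_nonneg fun ω => Real.rpow_nonneg (norm_nonneg _) _
  have hCmp := Cm_pos hm
  have hstep : m * (∫ ω, ‖X ω‖ ^ (m-2) * ⟪X ω, Θ ω⟫ ∂P)
      ≤ m * ((∫ ω, ‖X ω‖ ^ (m-1) ∂P) * ∫ ω, ‖Θ ω‖ ∂P) :=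
    mul_le_mul_of_nonneg_left hGΘle hm0.le
  linarith [hmain, hstep, mul_nonneg hm0.le hT2, mul_nonneg hm0.le hT3,
    mul_nonneg hCmp.le hT1]
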